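/- The target vector is majorized by the intermediate vector of the recursive construction: φ ≺ φ^f, i.e., ∑_{i=1}^k φ_i ≤ ∑_{i=1}^k φ^f_i for every k ∈ {1,…,d}. -/
import Mathlib


open Finset

/-- Tail-sum coherence monotone `C_l(p) = ∑_{i=l}^d p_i`, for a vector with (1-based)
entries `p 1, …, p d`.  Note `Cm d p (d+1) = 0` automatically. -/
noncomputable def Cm (d : ℕ) (p : ℕ → ℝ) (l : ℕ) : ℝ := ∑ i ∈ Finset.Icc l d, p i

/-- `p` is a descending probability vector on the (1-based) index range `{1, …, d}`. -/
structure DescProb (d : ℕ) (p : ℕ → ℝ) : Prop where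
  nonneg : ∀ i, 1 ≤ i → i ≤ d → 0 ≤ p i
  anti : ∀ i j, 1 ≤ i → i ≤ j → j ≤ d → p j ≤ p i
  sum_one : ∑ i ∈ Finset.Icc 1 d, p i = 1

/-- `p ≺ q` : `p` is majorized by `q` (both regarded as descending vectors on `{1, …, d}`). -/
def MajorizedBy (d : ℕ) (p q : ℕ → ℝ) : Prop :=
  (∀ k, 1 ≤ k → k ≤ d → ∑ i ∈ Finset.Icc 1 k, p i ≤ ∑ i ∈ Finset.Icc 1 k, q i) ∧
    ∑ i ∈ Finset.Icc 1 d, p i = ∑ i ∈ Finset.Icc 1 d, q i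

/-- The ratio `(C_l(ψ) - C_prev(ψ)) / (C_l(φ) - C_prev(φ))` appearing in the recursive
construction of the intermediate vector. -/
noncomputable def ratio (d : ℕ) (ψ φ : ℕ → ℝ) (prev l : ℕ) : ℝ :=
  (Cm d ψ l - Cm d ψ prev) / (Cm d φ l - Cm d φ prev)

/-- One step of the recursion: the minimal ratio over `l ∈ {1, …, prev - 1}`. -/
noncomputable def stepQ (d : ℕ) (ψ φ : ℕ → ℝ) (prev : ℕ) : ℝ :=
  sInf {x : ℝ | ∃ l, 1 ≤ l ∧ l ≤ prev - 1 ∧ x = ratio d ψ φ prev l}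

/-- One step of the recursion: the smallest `l ∈ {1, …, prev - 1}` attaining the minimal
ratio. -/
noncomputable def stepL (d : ℕ) (ψ φ : ℕ → ℝ) (prev : ℕ) : ℕ :=
  sInf {l : ℕ | 1 ≤ l ∧ l ≤ prev - 1 ∧ ratio d ψ φ prev l = stepQ d ψ φ prev}

/-- The sequence of indices `l_0 = d + 1 > l_1 > l_2 > ⋯` of the recursive construction. -/
noncomputable def Lseq (d : ℕ) (ψ φ : ℕ → ℝ) : ℕ → ℕ
  | 0 => d + 1
  | j + 1 => stepL d ψ φ (Lseq d ψ φ j)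

/-- The sequence of ratios `q_1 < q_2 < ⋯` of the recursive construction (`Qseq d ψ φ j`
is `q_j` for `j ≥ 1`; the value at `0` is irrelevant). -/
noncomputable def Qseq (d : ℕ) (ψ φ : ℕ → ℝ) : ℕ → ℝ
  | 0 => 1
  | j + 1 => stepQ d ψ φ (Lseq d ψ φ j)

/-- The terminating step `k` of the recursion: the first index `j` with `l_j = 1`. -/
noncomputable def kstop (d : ℕ) (ψ φ : ℕ → ℝ) : ℕ := sInf {j : ℕ | Lseq d ψ φ j = 1}

/-- The intermediate vector `φ^f`, with `φ^f_i = q_j φ_i` for `i ∈ {l_j, …, l_{j-1} - 1}`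
(for `i ∈ {1, …, d}`, the smallest `j` with `l_j ≤ i` is precisely the `j` with
`l_j ≤ i ≤ l_{j-1} - 1`). -/
noncomputable def phif (d : ℕ) (ψ φ : ℕ → ℝ) (i : ℕ) : ℝ :=
  Qseq d ψ φ (sInf {j : ℕ | Lseq d ψ φ j ≤ i}) * φ i

section Aux

variable (d : ℕ) (ψ φ : ℕ → ℝ)

lemma Cm_sub (p : ℕ → ℝ) (l m : ℕ) (hl : 1 ≤ l) (hlm : l ≤ m) (hmd : m ≤ d + 1) :
    Cm d p l - Cm d p m = ∑ i ∈ Finset.Icc l (m - 1), p i := by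
  have hu : Finset.Icc l d = Finset.Icc l (m - 1) ∪ Finset.Icc m d := by
    ext i
    simp only [Finset.mem_Icc, Finset.mem_union]
    omega
  have hdisj : Disjoint (Finset.Icc l (m - 1)) (Finset.Icc m d) := by
    rw [Finset.disjoint_left]
    intro a ha hb
    simp only [Finset.mem_Icc] at ha hb
    omega
  unfold Cm
  rw [hu, Finset.sum_union hdisj]
  ring

lemma den_pos (p : ℕ → ℝ) (hppos : ∀ i, 1 ≤ i → i ≤ d → 0 < p i) (l m : ℕ)
    (hl : 1 ≤ l) (hlm : l + 1 ≤ m) (hmd : m ≤ d + 1) : 0 < Cm d p l - Cm d p m := by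
  rw [Cm_sub d p l m hl (by omega) hmd]
  apply Finset.sum_pos
  · intro i hi
    rw [Finset.mem_Icc] at hi
    exact hppos i (by omega) (by omega)
  · exact Finset.nonempty_Icc.mpr (by omega)

lemma step_spec (prev : ℕ) (h2 : 2 ≤ prev) :
    (1 ≤ stepL d ψ φ prev ∧ stepL d ψ φ prev ≤ prev - 1 ∧
      ratio d ψ φ prev (stepL d ψ φ prev) = stepQ d ψ φ prev) ∧
    ∀ l, 1 ≤ l → l ≤ prev - 1 → stepQ d ψ φ prev ≤ ratio d ψ φ prev l := by
  have hSim : {x : ℝ | ∃ l, 1 ≤ l ∧ l ≤ prev - 1 ∧ x = ratio d ψ φ prev l} =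
      (fun l : ℕ => ratio d ψ φ prev l) '' (Set.Icc 1 (prev - 1)) := by
    ext x
    constructor
    · rintro ⟨l, ha, hb, rfl⟩
      exact ⟨l, ⟨ha, hb⟩, rfl⟩
    · rintro ⟨l, ⟨ha, hb⟩, rfl⟩
      exact ⟨l, ha, hb, rfl⟩
  have hfin : {x : ℝ | ∃ l, 1 ≤ l ∧ l ≤ prev - 1 ∧ x = ratio d ψ φ prev l}.Finite := by
    rw [hSim]; exact (Set.finite_Icc _ _).image _
  have hne : {x : ℝ | ∃ l, 1 ≤ l ∧ l ≤ prev - 1 ∧ x = ratio d ψ φ prev l}.Nonempty :=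
    ⟨ratio d ψ φ prev 1, 1, le_refl 1, by omega, rfl⟩
  have hmem : stepQ d ψ φ prev ∈
      {x : ℝ | ∃ l, 1 ≤ l ∧ l ≤ prev - 1 ∧ x = ratio d ψ φ prev l} :=
    hne.csInf_mem hfin
  have hlb : ∀ l, 1 ≤ l → l ≤ prev - 1 → stepQ d ψ φ prev ≤ ratio d ψ φ prev l := by
    intro l ha hb
    exact csInf_le hfin.bddBelow ⟨l, ha, hb, rfl⟩
  obtain ⟨l0, hl01, hl0p, hl0e⟩ := hmem
  have hTne : {l : ℕ | 1 ≤ l ∧ l ≤ prev - 1 ∧ ratio d ψ φ prev l = stepQ d ψ φ prev}.Nonempty :=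
    ⟨l0, hl01, hl0p, hl0e.symm⟩
  have hL := Nat.sInf_mem hTne
  exact ⟨⟨hL.1, hL.2.1, hL.2.2⟩, hlb⟩

lemma Lseq_bounds : ∀ j, (∀ j', j' < j → 2 ≤ Lseq d ψ φ j') →
    1 ≤ Lseq d ψ φ j ∧ Lseq d ψ φ j + j ≤ d + 1 := by
  intro j
  induction j with
  | zero => intro _; simp [Lseq]
  | succ n ih =>
    intro h
    have h2 : 2 ≤ Lseq d ψ φ n := h n (Nat.lt_succ_self n)
    have hs := (step_spec d ψ φ (Lseq d ψ φ n) h2).1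
    have ihb := ih (fun j' hj' => h j' (Nat.lt_succ_of_lt hj'))
    have he : Lseq d ψ φ (n + 1) = stepL d ψ φ (Lseq d ψ φ n) := rfl
    have h1 := hs.1
    have h2' := hs.2.1
    omega

lemma Lseq_exists_one : ∃ j, Lseq d ψ φ j = 1 := by
  by_contra h
  push_neg at h
  have h2 : ∀ j, 2 ≤ Lseq d ψ φ j := by
    intro j
    induction j using Nat.strong_induction_on with
    | _ j ih =>
      have hb := Lseq_bounds d ψ φ j (fun j' hj' => ih j' hj')
      have hne := h j
      omega
  have hb := Lseq_bounds d ψ φ (d + 1) (fun j' _ => h2 j')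
  have h2' := h2 (d + 1)
  omega

lemma kstop_one : Lseq d ψ φ (kstop d ψ φ) = 1 :=
  Nat.sInf_mem (Lseq_exists_one d ψ φ)

lemma lt_kstop_ne_one : ∀ j < kstop d ψ φ, Lseq d ψ φ j ≠ 1 := by
  intro j hj
  unfold kstop at hj
  have h := Nat.notMem_of_lt_sInf (s := {j : ℕ | Lseq d ψ φ j = 1}) hj
  exact h

lemma L_facts : ∀ j ≤ kstop d ψ φ,
    (1 ≤ Lseq d ψ φ j ∧ Lseq d ψ φ j + j ≤ d + 1) ∧
      (j < kstop d ψ φ → 2 ≤ Lseq d ψ φ j) := by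
  intro j
  induction j using Nat.strong_induction_on with
  | _ j ih =>
    intro hj
    have hb := Lseq_bounds d ψ φ j (fun j' hj' =>
      (ih j' hj' (le_of_lt (lt_of_lt_of_le hj' hj))).2 (lt_of_lt_of_le hj' hj))
    refine ⟨hb, fun hlt => ?_⟩
    have hne := lt_kstop_ne_one d ψ φ j hlt
    omega

lemma L_step : ∀ j < kstop d ψ φ,
    1 ≤ Lseq d ψ φ (j + 1) ∧ Lseq d ψ φ (j + 1) ≤ Lseq d ψ φ j - 1 := by
  intro j hj
  have h2 := (L_facts d ψ φ j (le_of_lt hj)).2 hj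
  have hs := (step_spec d ψ φ (Lseq d ψ φ j) h2).1
  have he : Lseq d ψ φ (j + 1) = stepL d ψ φ (Lseq d ψ φ j) := rfl
  rw [he]
  exact ⟨hs.1, hs.2.1⟩

lemma L_add : ∀ n j, j + n ≤ kstop d ψ φ → Lseq d ψ φ (j + n) + n ≤ Lseq d ψ φ j := by
  intro n
  induction n with
  | zero => intro j _; simp
  | succ n ih =>
    intro j h
    have h1 := ih (j + 1) (by omega)
    have h2 := L_step d ψ φ j (by omega)
    have h3 := (L_facts d ψ φ j (by omega)).2 (by omega)
    have he : j + (n + 1) = (j + 1) + n := by omega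
    rw [he]
    omega

lemma block_le (hφpos : ∀ i, 1 ≤ i → i ≤ d → 0 < φ i) :
    ∀ j < kstop d ψ φ, ∀ l, 1 ≤ l → l + 1 ≤ Lseq d ψ φ j →
    Qseq d ψ φ (j + 1) * (Cm d φ l - Cm d φ (Lseq d ψ φ j)) ≤
      Cm d ψ l - Cm d ψ (Lseq d ψ φ j) := by
  intro j hj l hl hlp
  have h2 := (L_facts d ψ φ j (le_of_lt hj)).2 hj
  have hbd := (L_facts d ψ φ j (le_of_lt hj)).1
  have hden : 0 < Cm d φ l - Cm d φ (Lseq d ψ φ j) :=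
    den_pos d φ hφpos l (Lseq d ψ φ j) hl hlp (by omega)
  have hq := (step_spec d ψ φ (Lseq d ψ φ j) h2).2 l hl (by omega)
  have hQ : Qseq d ψ φ (j + 1) = stepQ d ψ φ (Lseq d ψ φ j) := rfl
  rw [hQ]
  calc stepQ d ψ φ (Lseq d ψ φ j) * (Cm d φ l - Cm d φ (Lseq d ψ φ j))
      ≤ ratio d ψ φ (Lseq d ψ φ j) l * (Cm d φ l - Cm d φ (Lseq d ψ φ j)) :=
        mul_le_mul_of_nonneg_right hq (le_of_lt hden)
    _ = Cm d ψ l - Cm d ψ (Lseq d ψ φ j) := by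
        unfold ratio
        rw [div_mul_cancel₀ _ (ne_of_gt hden)]

lemma block_eq (hφpos : ∀ i, 1 ≤ i → i ≤ d → 0 < φ i) :
    ∀ j < kstop d ψ φ,
    Qseq d ψ φ (j + 1) * (Cm d φ (Lseq d ψ φ (j + 1)) - Cm d φ (Lseq d ψ φ j)) =
      Cm d ψ (Lseq d ψ φ (j + 1)) - Cm d ψ (Lseq d ψ φ j) := by
  intro j hj
  have h2 := (L_facts d ψ φ j (le_of_lt hj)).2 hj
  have hbd := (L_facts d ψ φ j (le_of_lt hj)).1
  have hs := (step_spec d ψ φ (Lseq d ψ φ j) h2).1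
  have hstep := L_step d ψ φ j hj
  have hden : 0 < Cm d φ (Lseq d ψ φ (j + 1)) - Cm d φ (Lseq d ψ φ j) :=
    den_pos d φ hφpos _ _ hstep.1 (by omega) (by omega)
  have hL : Lseq d ψ φ (j + 1) = stepL d ψ φ (Lseq d ψ φ j) := rfl
  have hQ : Qseq d ψ φ (j + 1) = stepQ d ψ φ (Lseq d ψ φ j) := rfl
  have he : ratio d ψ φ (Lseq d ψ φ j) (Lseq d ψ φ (j + 1)) = Qseq d ψ φ (j + 1) := by
    rw [hL, hQ]; exact hs.2.2
  unfold ratio at he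
  rw [div_eq_iff (ne_of_gt hden)] at he
  linarith [he]

lemma Q_mono_succ (hφpos : ∀ i, 1 ≤ i → i ≤ d → 0 < φ i) :
    ∀ j, j + 2 ≤ kstop d ψ φ → Qseq d ψ φ (j + 1) ≤ Qseq d ψ φ (j + 2) := by
  intro j hj
  have hj1 : j < kstop d ψ φ := by omega
  have hj2 : j + 1 < kstop d ψ φ := by omega
  have e1 := block_eq d ψ φ hφpos j hj1
  have e2 := block_eq d ψ φ hφpos (j + 1) hj2
  have hL2 := L_step d ψ φ (j + 1) hj2
  have hnorm : j + 1 + 1 = j + 2 := by omega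
  rw [hnorm] at hL2 e2
  have hL1 := L_step d ψ φ j hj1
  have h2j := (L_facts d ψ φ j (by omega)).2 (by omega)
  have hbd := (L_facts d ψ φ j (by omega)).1
  have hle := block_le d ψ φ hφpos j hj1 (Lseq d ψ φ (j + 2)) hL2.1 (by omega)
  have hB2 : 0 < Cm d φ (Lseq d ψ φ (j + 2)) - Cm d φ (Lseq d ψ φ (j + 1)) :=
    den_pos d φ hφpos _ _ hL2.1 (by omega) (by omega)
  have key : Qseq d ψ φ (j + 1) * (Cm d φ (Lseq d ψ φ (j + 2)) - Cm d φ (Lseq d ψ φ (j + 1))) ≤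
      Qseq d ψ φ (j + 2) * (Cm d φ (Lseq d ψ φ (j + 2)) - Cm d φ (Lseq d ψ φ (j + 1))) := by
    nlinarith [e1, e2, hle]
  exact le_of_mul_le_mul_right key hB2

lemma Q_mono (hφpos : ∀ i, 1 ≤ i → i ≤ d → 0 < φ i) :
    ∀ b ≤ kstop d ψ φ, ∀ a, 1 ≤ a → a ≤ b → Qseq d ψ φ a ≤ Qseq d ψ φ b := by
  intro b
  induction b with
  | zero => intro _ a h1 h2; omega
  | succ n ih =>
    intro hK a h1 h2
    rcases eq_or_lt_of_le h2 with heq | hlt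
    · rw [heq]
    · have han : a ≤ n := by omega
      have hn1 : 1 ≤ n := by omega
      obtain ⟨m, rfl⟩ : ∃ m, n = m + 1 := ⟨n - 1, by omega⟩
      exact le_trans (ih (by omega) a h1 han) (Q_mono_succ d ψ φ hφpos m (by omega))

lemma jdx_spec (i : ℕ) (h1 : 1 ≤ i) (hid : i ≤ d) :
    1 ≤ sInf {j | Lseq d ψ φ j ≤ i} ∧ sInf {j | Lseq d ψ φ j ≤ i} ≤ kstop d ψ φ ∧
      Lseq d ψ φ (sInf {j | Lseq d ψ φ j ≤ i}) ≤ i := by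
  have hKmem : kstop d ψ φ ∈ {j | Lseq d ψ φ j ≤ i} := by
    show Lseq d ψ φ (kstop d ψ φ) ≤ i
    rw [kstop_one d ψ φ]
    omega
  have hne : {j | Lseq d ψ φ j ≤ i}.Nonempty := ⟨kstop d ψ φ, hKmem⟩
  have hmem := Nat.sInf_mem hne
  have h0 : 1 ≤ sInf {j | Lseq d ψ φ j ≤ i} := by
    by_contra hcon
    have h0' : sInf {j | Lseq d ψ φ j ≤ i} = 0 := by omega
    rw [h0'] at hmem
    have : Lseq d ψ φ 0 = d + 1 := rfl
    have hm : Lseq d ψ φ 0 ≤ i := hmem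
    omega
  exact ⟨h0, Nat.sInf_le hKmem, hmem⟩

lemma r_anti (hφpos : ∀ i, 1 ≤ i → i ≤ d → 0 < φ i) (i i' : ℕ)
    (h1 : 1 ≤ i) (hii : i ≤ i') (hi'd : i' ≤ d) :
    Qseq d ψ φ (sInf {j | Lseq d ψ φ j ≤ i'}) ≤ Qseq d ψ φ (sInf {j | Lseq d ψ φ j ≤ i}) := by
  obtain ⟨ha1, haK, ham⟩ := jdx_spec d ψ φ i h1 (le_trans hii hi'd)
  obtain ⟨hb1, hbK, _⟩ := jdx_spec d ψ φ i' (by omega) hi'd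
  have hsub : sInf {j | Lseq d ψ φ j ≤ i'} ≤ sInf {j | Lseq d ψ φ j ≤ i} :=
    Nat.sInf_le (show Lseq d ψ φ (sInf {j | Lseq d ψ φ j ≤ i}) ≤ i' from le_trans ham hii)
  exact Q_mono d ψ φ hφpos (sInf {j | Lseq d ψ φ j ≤ i}) haK
    (sInf {j | Lseq d ψ φ j ≤ i'}) hb1 hsub

lemma jdx_block (j : ℕ) (hj : j < kstop d ψ φ) (i : ℕ)
    (hi1 : Lseq d ψ φ (j + 1) ≤ i) (hi2 : i < Lseq d ψ φ j) :
    sInf {j' | Lseq d ψ φ j' ≤ i} = j + 1 := by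
  have hmem : j + 1 ∈ {j' | Lseq d ψ φ j' ≤ i} := hi1
  apply le_antisymm (Nat.sInf_le hmem)
  by_contra hcon
  push_neg at hcon
  have hmem2 := Nat.sInf_mem (⟨j + 1, hmem⟩ : {j' | Lseq d ψ φ j' ≤ i}.Nonempty)
  set s := sInf {j' | Lseq d ψ φ j' ≤ i} with hs
  have hsj : s ≤ j := by omega
  have hmono : Lseq d ψ φ j ≤ Lseq d ψ φ s := by
    have hadd := L_add d ψ φ (j - s) s (by omega)
    have he : s + (j - s) = j := by omega
    rw [he] at hadd
    omega
  have hm2 : Lseq d ψ φ s ≤ i := hmem2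
  omega

lemma tail_sum (hφpos : ∀ i, 1 ≤ i → i ≤ d → 0 < φ i) : ∀ j ≤ kstop d ψ φ,
    ∑ i ∈ Finset.Icc (Lseq d ψ φ j) d, phif d ψ φ i = Cm d ψ (Lseq d ψ φ j) := by
  intro j
  induction j with
  | zero =>
    intro _
    have he : Lseq d ψ φ 0 = d + 1 := rfl
    rw [he]
    unfold Cm
    rw [Finset.Icc_eq_empty (by omega)]
    simp
  | succ n ih =>
    intro hK
    have hnK : n < kstop d ψ φ := by omega
    have ihv := ih (by omega)
    have hLn := (L_facts d ψ φ n (by omega)).1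
    have h2n := (L_facts d ψ φ n (by omega)).2 hnK
    have hstep := L_step d ψ φ n hnK
    have hsplit : Finset.Icc (Lseq d ψ φ (n + 1)) d =
        Finset.Icc (Lseq d ψ φ (n + 1)) (Lseq d ψ φ n - 1) ∪ Finset.Icc (Lseq d ψ φ n) d := by
      ext x
      simp only [Finset.mem_Icc, Finset.mem_union]
      omega
    have hdisj : Disjoint (Finset.Icc (Lseq d ψ φ (n + 1)) (Lseq d ψ φ n - 1))
        (Finset.Icc (Lseq d ψ φ n) d) := by
      rw [Finset.disjoint_left]
      intro a ha hb
      simp only [Finset.mem_Icc] at ha hb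
      omega
    rw [hsplit, Finset.sum_union hdisj, ihv]
    have hblock : ∑ i ∈ Finset.Icc (Lseq d ψ φ (n + 1)) (Lseq d ψ φ n - 1), phif d ψ φ i =
        Qseq d ψ φ (n + 1) * ∑ i ∈ Finset.Icc (Lseq d ψ φ (n + 1)) (Lseq d ψ φ n - 1), φ i := by
      rw [Finset.mul_sum]
      apply Finset.sum_congr rfl
      intro i hi
      rw [Finset.mem_Icc] at hi
      have hji := jdx_block d ψ φ n hnK i hi.1 (by omega)
      show Qseq d ψ φ (sInf {j' | Lseq d ψ φ j' ≤ i}) * φ i = _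
      rw [hji]
    rw [hblock]
    have hsum : ∑ i ∈ Finset.Icc (Lseq d ψ φ (n + 1)) (Lseq d ψ φ n - 1), φ i =
        Cm d φ (Lseq d ψ φ (n + 1)) - Cm d φ (Lseq d ψ φ n) :=
      (Cm_sub d φ (Lseq d ψ φ (n + 1)) (Lseq d ψ φ n) hstep.1 (by omega) (by omega)).symm
    rw [hsum, block_eq d ψ φ hφpos n hnK]
    ring

lemma total_sum (hψ : DescProb d ψ) (hφpos : ∀ i, 1 ≤ i → i ≤ d → 0 < φ i) :
    ∑ i ∈ Finset.Icc 1 d, phif d ψ φ i = 1 := by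
  have ht := tail_sum d ψ φ hφpos (kstop d ψ φ) (le_refl _)
  rw [kstop_one d ψ φ] at ht
  rw [ht]
  exact hψ.sum_one

end Aux

/-- The target vector is majorized by the intermediate vector of the
recursive construction: `φ ≺ φ^f`. -/
theorem target_majorized_by_phif (d : ℕ) (hd : 1 ≤ d) (ψ φ : ℕ → ℝ)
    (hψ : DescProb d ψ) (hφ : DescProb d φ)
    (hψpos : ∀ i, 1 ≤ i → i ≤ d → 0 < ψ i) (hφpos : ∀ i, 1 ≤ i → i ≤ d → 0 < φ i) :
    MajorizedBy d φ (phif d ψ φ) := by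
  constructor
  · intro k hk1 hkd
    have hphif : ∀ i, phif d ψ φ i = Qseq d ψ φ (sInf {j | Lseq d ψ φ j ≤ i}) * φ i :=
      fun _ => rfl
    by_cases hcase : 1 ≤ Qseq d ψ φ (sInf {j | Lseq d ψ φ j ≤ k})
    · apply Finset.sum_le_sum
      intro i hi
      rw [Finset.mem_Icc] at hi
      rw [hphif i]
      have hri := r_anti d ψ φ hφpos i k hi.1 hi.2 hkd
      have hφi : 0 ≤ φ i := hφ.nonneg i hi.1 (by omega)
      nlinarith
    · push_neg at hcase
      have htail : ∑ i ∈ Finset.Icc (k + 1) d, phif d ψ φ i ≤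
          ∑ i ∈ Finset.Icc (k + 1) d, φ i := by
        apply Finset.sum_le_sum
        intro i hi
        rw [Finset.mem_Icc] at hi
        rw [hphif i]
        have hri := r_anti d ψ φ hφpos k i hk1 (by omega) hi.2
        have hφi : 0 ≤ φ i := hφ.nonneg i (by omega) hi.2
        nlinarith
      have hsplit : Finset.Icc 1 d = Finset.Icc 1 k ∪ Finset.Icc (k + 1) d := by
        ext x
        simp only [Finset.mem_Icc, Finset.mem_union]
        omega
      have hdisj : Disjoint (Finset.Icc 1 k) (Finset.Icc (k + 1) d) := by
        rw [Finset.disjoint_left]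
        intro a ha hb
        simp only [Finset.mem_Icc] at ha hb
        omega
      have h1' := hφ.sum_one
      have h2' := total_sum d ψ φ hψ hφpos
      rw [hsplit, Finset.sum_union hdisj] at h1' h2'
      linarith
  · rw [hφ.sum_one, total_sum d ψ φ hψ hφpos]
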